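/- Let K be a field of characteristic ≠ p containing a primitive p-th root of unity, L/K a finite Galois extension, and α ∈ L^× an element such that for every σ ∈ Gal(L/K), σ(α)·α^{-e(σ)} ∈ (L^×)^p for some integer e(σ) (i.e., the class of α in L^×/(L^×)^p spans a Gal(L/K)-stable line). Then the extension L(α^{1/p})/K is Galois. -/

import Mathlib

open Polynomial IntermediateField

set_option synthInstance.maxHeartbeats 1000000
set_option maxHeartbeats 1600000

private lemma splits_msprod {K : Type*} [Field K] (s : Multiset K[X])
    (h : ∀ f ∈ s, Splits f) : Splits s.prod := by
  induction s using Multiset.induction_on with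
  | empty => simpa using Splits.one
  | cons a s ih =>
    rw [Multiset.prod_cons]
    exact Splits.mul (h a (Multiset.mem_cons_self a s))
      (ih fun f hf => h f (Multiset.mem_cons_of_mem hf))

/-- Let `K` be a field of characteristic `≠ p` containing a primitive `p`-th root of unity,
`L/K` a finite Galois extension, and `α ∈ Lˣ` such that the class of `α` in `Lˣ/(Lˣ)^p`
spans a `Gal(L/K)`-stable line. Then `L(α^{1/p})/K` is Galois. -/
theorem stmt11 (p : ℕ) (hp : p.Prime) (K Ω : Type*) [Field K] [Field Ω] [Algebra K Ω]
    (hchar : (p : K) ≠ 0) (ζ : K) (hζ : IsPrimitiveRoot ζ p)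
    (L : IntermediateField K Ω) [FiniteDimensional K L] [IsGalois K ↥L]
    (α : ↥L) (hα : α ≠ 0)
    (hstable : ∀ σ : ↥L ≃ₐ[K] ↥L, ∃ (e : ℤ) (β : ↥L), β ≠ 0 ∧ σ α = α ^ e * β ^ p)
    (r : Ω) (hr : r ^ p = algebraMap ↥L Ω α) :
    IsGalois K ↥(L ⊔ IntermediateField.adjoin K {r}) := by
  haveI : NeZero p := ⟨hp.ne_zero⟩
  set F := L ⊔ IntermediateField.adjoin K {r} with hF
  have hαΩ : algebraMap ↥L Ω α ≠ 0 := fun h => hα ((algebraMap ↥L Ω).injective (by simpa using h))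
  have hr0 : r ≠ 0 := by
    intro h
    exact hαΩ (by rw [← hr, h, zero_pow hp.ne_zero])
  have hrF : r ∈ F := by
    have h1 : IntermediateField.adjoin K {r} ≤ F := le_sup_right
    exact h1 (subset_adjoin K {r} rfl)
  have hint : IsIntegral K α := IsIntegral.of_finite K α
  set m := minpoly K α with hm
  have hm0 : m ≠ 0 := minpoly.ne_zero hint
  have hmmonic : m.Monic := minpoly.monic hint
  set q : K[X] := m.comp (X ^ p) with hq
  have hq0 : q ≠ 0 := fun h => by
    have : q.natDegree = m.natDegree * p := by
      rw [hq, natDegree_comp, natDegree_X_pow]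
    rw [h, natDegree_zero] at this
    have hdeg : 0 < m.natDegree := minpoly.natDegree_pos hint
    exact absurd this.symm (Nat.mul_ne_zero hdeg.ne' hp.ne_zero)
  have hζΩ : IsPrimitiveRoot (algebraMap K Ω ζ) p :=
    hζ.map_of_injective (algebraMap K Ω).injective
  -- Claim 1 : every root of `m` in `L` has a `p`-th root in `F`.
  have key : ∀ b : ↥L, (Polynomial.aeval b) m = 0 →
      ∃ c : Ω, c ≠ 0 ∧ c ^ p = algebraMap ↥L Ω b ∧ c ∈ F := by
    intro b hb
    obtain ⟨σ, hσ⟩ := minpoly.exists_algEquiv_of_root' hint.isAlgebraic hb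
    obtain ⟨e, β, hβ, hσα⟩ := hstable σ
    have hβΩ : algebraMap ↥L Ω β ≠ 0 := fun h => hβ ((algebraMap ↥L Ω).injective (by simpa using h))
    refine ⟨r ^ e * algebraMap ↥L Ω β, mul_ne_zero (zpow_ne_zero _ hr0) hβΩ, ?_, ?_⟩
    · rw [mul_pow, ← zpow_natCast (r ^ e), ← zpow_mul, mul_comm e (p : ℤ), zpow_mul,
        zpow_natCast, hr, ← map_zpow₀, ← map_pow, ← map_mul, ← hσα, hσ]
    · have h2 : L ≤ F := le_sup_left
      have hβF : algebraMap ↥L Ω β ∈ F := h2 β.2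
      exact mul_mem (zpow_mem hrF e) hβF
  have hmsplit : Splits (m.map (algebraMap K ↥L)) := Normal.splits inferInstance α
  set mL := m.map (algebraMap K ↥L) with hmL
  have hmLroots : ∀ b ∈ mL.roots, (Polynomial.aeval b) m = 0 := by
    intro b hb
    have := (mem_roots'.1 hb).2
    rwa [IsRoot.def, hmL, eval_map, ← aeval_def] at this
  have hmLprod : mL = (mL.roots.map fun b => X - C b).prod :=
    hmsplit.eq_prod_roots_of_monic (hmmonic.map _)
  have hroots : (m.map (algebraMap K Ω)).roots = mL.roots.map (algebraMap ↥L Ω) := by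
    rw [IsScalarTower.algebraMap_eq K ↥L Ω, ← Polynomial.map_map, ← hmL,
      hmsplit.roots_map _]
  -- `q` splits over `Ω`.
  have hqΩ : q.map (algebraMap K Ω)
      = (mL.roots.map fun b => X ^ p - C (algebraMap ↥L Ω b)).prod := by
    rw [hq, Polynomial.map_comp, Polynomial.map_pow, map_X,
      IsScalarTower.algebraMap_eq K ↥L Ω, ← Polynomial.map_map, ← hmL]
    conv_lhs => rw [hmLprod]
    rw [Polynomial.map_multiset_prod, multiset_prod_comp, Multiset.map_map, Multiset.map_map]
    congr 1
    refine Multiset.map_congr rfl fun b _ => ?_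
    simp [sub_comp]
  have hsplitsq : Splits (q.map (algebraMap K Ω)) := by
    rw [hqΩ]
    refine splits_msprod _ fun f hf => ?_
    obtain ⟨b, hb, rfl⟩ := Multiset.mem_map.1 hf
    obtain ⟨c, -, hc, -⟩ := key b (hmLroots b hb)
    exact X_pow_sub_C_splits_of_isPrimitiveRoot hζΩ hc
  -- all roots of `q` in `Ω` lie in `F`.
  have hrootsF : ∀ x ∈ q.rootSet Ω, x ∈ F := by
    intro x hx
    have hx' : (Polynomial.aeval x) q = 0 := (mem_rootSet.1 hx).2
    rw [hq, aeval_comp, map_pow, aeval_X] at hx'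
    have hxp : x ^ p ∈ (m.map (algebraMap K Ω)).roots := by
      rw [mem_roots (map_ne_zero hm0), IsRoot.def, eval_map, ← aeval_def]
      exact hx'
    rw [hroots, Multiset.mem_map] at hxp
    obtain ⟨b, hbmem, hbx⟩ := hxp
    obtain ⟨c, hc0, hcp, hcF⟩ := key b (hmLroots b hbmem)
    have hxp' : x ^ p = c ^ p := by rw [hcp, hbx]
    have hxc : (x * c⁻¹) ^ p = 1 := by
      rw [mul_pow, inv_pow, hxp', mul_inv_cancel₀ (pow_ne_zero _ hc0)]
    obtain ⟨i, -, hζi⟩ := hζΩ.eq_pow_of_pow_eq_one hxc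
    have hxeq : x = algebraMap K Ω ζ ^ i * c := by
      rw [hζi]
      field_simp
    rw [hxeq]
    exact mul_mem (pow_mem (F.algebraMap_mem ζ) i) hcF
  have hrq : r ∈ q.rootSet Ω := by
    rw [mem_rootSet]
    refine ⟨hq0, ?_⟩
    rw [hq, aeval_comp, map_pow, aeval_X, hr, aeval_algebraMap_apply, minpoly.aeval, map_zero]
  set M := IntermediateField.adjoin K (q.rootSet Ω) with hM
  have hFM : L ⊔ M = F := by
    refine le_antisymm (sup_le le_sup_left (adjoin_le_iff.2 fun x hx => hrootsF x hx)) ?_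
    rw [hF]
    refine sup_le le_sup_left ?_
    exact le_trans (adjoin_le_iff.2 (Set.singleton_subset_iff.2 (subset_adjoin K _ hrq)))
      le_sup_right
  haveI : Polynomial.IsSplittingField K ↥M q :=
    IntermediateField.adjoin_rootSet_isSplittingField (K := K) (L := Ω) hsplitsq
  haveI hnormLM : Normal K ↥(L ⊔ M) :=
    haveI : Normal K ↥M := Normal.of_isSplittingField (F := K) (E := ↥M) q
    IntermediateField.normal_sup (E := L) (E' := M)
  have hnormal : Normal K ↥F := hFM ▸ hnormLM
  -- separability
  have hpL : (p : ↥L) ≠ 0 := by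
    have h3 : algebraMap K ↥L (p : K) ≠ 0 :=
      fun h => hchar ((algebraMap K ↥L).injective (by simpa using h))
    simpa [map_natCast] using h3
  have hsepr : IsSeparable ↥L r := by
    refine Polynomial.Separable.of_dvd (separable_X_pow_sub_C α hpL hα) (minpoly.dvd ↥L r ?_)
    rw [map_sub, map_pow, aeval_X, aeval_C, hr, sub_self]
  haveI : Algebra.IsSeparable ↥L ↥(IntermediateField.adjoin ↥L {r}) :=
    (isSeparable_adjoin_simple_iff_isSeparable ↥L Ω).2 hsepr
  haveI hsepE : Algebra.IsSeparable K ↥(IntermediateField.adjoin ↥L {r}) :=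
    Algebra.IsSeparable.trans K ↥L ↥(IntermediateField.adjoin ↥L {r})
  have hres : IntermediateField.restrictScalars K (IntermediateField.adjoin ↥L {r}) = F := by
    rw [restrictScalars_adjoin_eq_sup]
  have hsepF : Algebra.IsSeparable K ↥F := hres ▸ hsepE
  exact { to_normal := hnormal, to_isSeparable := hsepF }
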